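/- Let (M,g) be a compact Riemannian manifold with Ric_X := Ric + (1/2) L_X g ≥ ε(n-1) g and Ric ≤ (n-1) g for ε > 0. If ε = 1, then Ric = (n-1) g (M is Einstein) and X is a Killing field (L_X g = 0). -/
import Mathlib


open MeasureTheory

namespace Stmt1Aux
variable {n : ℕ}

def e (i : Fin n) : Fin n → ℝ := Pi.single i 1

def Q (A : Matrix (Fin n) (Fin n) ℝ) (u : Fin n → ℝ) : ℝ :=
  ∑ i, ∑ j, u i * u j * A i j

lemma Q_singles (A : Matrix (Fin n) (Fin n) ℝ) (i j : Fin n) :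
    ∑ x, ∑ y, e i x * e j y * A x y = A i j := by
  simp [e, Pi.single_apply]

lemma Q_single (A : Matrix (Fin n) (Fin n) ℝ) (i : Fin n) :
    Q A (e i) = A i i := by
  simpa [Q] using Q_singles A i i

lemma Q_pair (A : Matrix (Fin n) (Fin n) ℝ) (i j : Fin n) (a b : ℝ) :
    Q A (a • e i + b • e j) =
      a*a*A i i + a*b*A i j + b*a*A j i + b*b*A j j := by
  have h : ∀ x y, (a • e i + b • e j) x * (a • e i + b • e j) y * A x y =
      a*a*(e i x * e i y * A x y)
      + a*b*(e i x * e j y * A x y)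
      + b*a*(e j x * e i y * A x y)
      + b*b*(e j x * e j y * A x y) := by
    intro x y; simp only [Pi.add_apply, Pi.smul_apply, smul_eq_mul]; ring
  simp only [Q, h, Finset.sum_add_distrib, ← Finset.mul_sum, Q_singles]

lemma Q_one (u : Fin n → ℝ) : Q (1 : Matrix (Fin n) (Fin n) ℝ) u = ∑ k, u k ^ 2 := by
  simp [Q, Matrix.one_apply, mul_ite, Finset.sum_ite_eq, pow_two]

lemma norm_single (i : Fin n) : ∑ k, (e i k) ^ 2 = 1 := by
  simp [e, Pi.single_apply, apply_ite (· ^ 2)]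

lemma norm_pair (i j : Fin n) (hij : i ≠ j) (a b : ℝ) (hab : a^2 + b^2 = 1) :
    ∑ k, ((a • e i + b • e j) k) ^ 2 = 1 := by
  rw [← Q_one, Q_pair]
  simp only [Matrix.one_apply_eq, Matrix.one_apply_ne hij, Matrix.one_apply_ne hij.symm]
  nlinarith

lemma split_sum (R L : Matrix (Fin n) (Fin n) ℝ) (u : Fin n → ℝ) :
    ∑ i, ∑ j, u i * u j * (R i j + (1/2) * L i j) = Q R u + (1/2) * Q L u := by
  have h : ∀ x y, u x * u y * (R x y + (1/2) * L x y)
      = u x * u y * R x y + (1/2) * (u x * u y * L x y) := by intro x y; ring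
  simp only [Q, h, Finset.sum_add_distrib, ← Finset.mul_sum]

lemma sqrt2_sq : ((Real.sqrt 2)⁻¹ : ℝ) * (Real.sqrt 2)⁻¹ = 1/2 := by
  rw [← mul_inv, Real.mul_self_sqrt (by norm_num : (0:ℝ) ≤ 2)]
  norm_num

end Stmt1Aux

open Stmt1Aux

/-- Rigidity in the pinching condition: if a compact Riemannian `n`-manifold
with vector field `X` satisfies `Ric_X = Ric + (1/2) L_X g ≥ ε(n−1) g` and
`Ric ≤ (n−1) g` with `ε = 1`, then `Ric = (n−1) g` (Einstein) and `X` is a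
Killing field (`L_X g = 0`).  Setup as in the pinching estimate: tensors in
a continuous orthonormal frame as matrix-valued functions, compactness via a
finite nonzero volume measure that is positive on open sets, and `hdiv` the
divergence theorem `∫_M tr(L_X g) dvol = 0`. -/
theorem stmt_1 {M : Type*} [TopologicalSpace M] [MeasurableSpace M] [BorelSpace M]
    (n : ℕ) (hn : 2 ≤ n)
    (vol : Measure M) [IsFiniteMeasure vol] (hvol : vol ≠ 0) [vol.IsOpenPosMeasure]
    (Ric LXg : M → Matrix (Fin n) (Fin n) ℝ)
    (hRicSymm : ∀ p, (Ric p).IsSymm) (hLXgSymm : ∀ p, (LXg p).IsSymm)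
    (hRicCont : Continuous Ric) (hLXgCont : Continuous LXg)
    (hRicInt : Integrable (fun p => (Ric p).trace) vol)
    (hLXgInt : Integrable (fun p => (LXg p).trace) vol)
    (hdiv : ∫ p, (LXg p).trace ∂vol = 0)
    (hlower : ∀ p (u : Fin n → ℝ), ∑ i, u i ^ 2 = 1 →
      1 * ((n : ℝ) - 1) ≤ ∑ i, ∑ j, u i * u j * (Ric p i j + (1 / 2) * LXg p i j))
    (hupper : ∀ p (u : Fin n → ℝ), ∑ i, u i ^ 2 = 1 →
      (∑ i, ∑ j, u i * u j * Ric p i j) ≤ (n : ℝ) - 1) :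
    (∀ p, Ric p = ((n : ℝ) - 1) • (1 : Matrix (Fin n) (Fin n) ℝ)) ∧
      (∀ p, LXg p = 0) := by
  set a : ℝ := (Real.sqrt 2)⁻¹ with ha_def
  have ha : a * a = 1/2 := sqrt2_sq
  have hab : a^2 + a^2 = 1 := by rw [sq]; linarith
  have hab' : a^2 + (-a)^2 = 1 := by rw [neg_pow]; simpa using hab
  -- the pinching gives pointwise nonnegativity of Q (LXg p) on unit vectors
  have hQL : ∀ p (u : Fin n → ℝ), ∑ i, u i ^ 2 = 1 → 0 ≤ Q (LXg p) u := by
    intro p u hu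
    have h1 := hlower p u hu
    have h2 : Q (Ric p) u ≤ (n : ℝ) - 1 := hupper p u hu
    rw [split_sum] at h1
    linarith
  -- diagonal entries of LXg are nonneg
  have hdiag : ∀ p i, 0 ≤ LXg p i i := by
    intro p i
    have := hQL p (e i) (norm_single i)
    rwa [Q_single] at this
  -- trace is identically zero
  have htr0 : ∀ p, (LXg p).trace = 0 := by
    have hcont : Continuous fun p => (LXg p).trace := hLXgCont.matrix_trace
    have hae : (fun p => (LXg p).trace) =ᵐ[vol] 0 :=
      (integral_eq_zero_iff_of_nonneg
        (fun p => Finset.sum_nonneg fun i _ => hdiag p i) hLXgInt).mp hdiv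
    have := (Continuous.ae_eq_iff_eq vol hcont continuous_const).mp hae
    intro p; exact congrFun this p
  -- so each diagonal entry is zero
  have hdiag0 : ∀ p i, LXg p i i = 0 := fun p i =>
    (Finset.sum_eq_zero_iff_of_nonneg (fun i _ => hdiag p i)).mp
      (htr0 p) i (Finset.mem_univ i)
  -- LXg = 0
  have hL0 : ∀ p, LXg p = 0 := by
    intro p
    ext i j
    simp only [Matrix.zero_apply]
    by_cases hij : i = j
    · subst hij; exact hdiag0 p i
    · have hsymm : LXg p j i = LXg p i j := (hLXgSymm p).apply i j
      have h1 := hQL p (a • e i + a • e j) (norm_pair i j hij a a hab)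
      have h2 := hQL p (a • e i + (-a) • e j) (norm_pair i j hij a (-a) hab')
      rw [Q_pair] at h1 h2
      rw [hdiag0 p i, hdiag0 p j, hsymm] at h1 h2
      nlinarith [ha]
  refine ⟨?_, hL0⟩
  -- Q (Ric p) is constantly n-1 on unit vectors
  intro p
  have hlow' : ∀ u : Fin n → ℝ, ∑ i, u i ^ 2 = 1 → (n : ℝ) - 1 ≤ Q (Ric p) u := by
    intro u hu
    have h1 := hlower p u hu
    rw [split_sum] at h1
    have hQ0 : Q (LXg p) u = 0 := by simp [hL0 p, Q]
    linarith
  have hup' : ∀ u : Fin n → ℝ, ∑ i, u i ^ 2 = 1 → Q (Ric p) u ≤ (n : ℝ) - 1 :=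
    fun u hu => hupper p u hu
  have hdiagR : ∀ i, Ric p i i = (n : ℝ) - 1 := by
    intro i
    have h1 := hlow' (e i) (norm_single i)
    have h2 := hup' (e i) (norm_single i)
    rw [Q_single] at h1 h2
    linarith
  ext i j
  by_cases hij : i = j
  · subst hij
    simp [Matrix.smul_apply, Matrix.one_apply_eq, hdiagR i]
  · have hsymm : Ric p j i = Ric p i j := (hRicSymm p).apply i j
    have h1 := hlow' (a • e i + a • e j) (norm_pair i j hij a a hab)
    have h2 := hup' (a • e i + a • e j) (norm_pair i j hij a a hab)
    rw [Q_pair, hdiagR i, hdiagR j, hsymm] at h1 h2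
    have : Ric p i j = 0 := by nlinarith [ha]
    simp [Matrix.smul_apply, Matrix.one_apply_ne hij, this]
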